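/- Let N ≥ 2 and let g : ℝ → ℝ be any function that is unbounded below on (−∞, 0] (for instance any increasing bijection of ℝ). Then there exists X ∈ 𝕊(N) with X ≤ I such that −F_∞(e₁, X) > g(λ₁(X)). (One may take X = diag(1, 0, …, 0, c) for a suitable c ≤ 0, for which λ₁(X) = c and −F_∞(e₁, X) = 1.) In particular, the ∞-Laplace function F_∞ does not belong to Class M. -/

import Mathlib

open Matrix

/-- The Loewner partial order on matrices: `X ≤ Y` iff `Y - X` is positive semidefinite. -/
def Loewner {n : Type*} [Fintype n] (X Y : Matrix n n ℝ) : Prop := (Y - X).PosSemidef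

/-- The eigenvalues of a real symmetric matrix, listed in increasing order. -/
noncomputable def eigs {N : ℕ} (X : Matrix (Fin N) (Fin N) ℝ) : Fin N → ℝ :=
  if h : X.IsHermitian then h.eigenvalues ∘ Tuple.sort h.eigenvalues else 0

/-- The smallest eigenvalue of a real symmetric matrix. -/
noncomputable def lam1 {N : ℕ} (X : Matrix (Fin N) (Fin N) ℝ) : ℝ := ⨅ i, eigs X i

/-- The ∞-Laplace function `F_∞(ν, X) = −⟨Xν, ν⟩`. -/
def Finfty {N : ℕ} (ν : Fin N → ℝ) (X : Matrix (Fin N) (Fin N) ℝ) : ℝ :=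
  -(X.mulVec ν ⬝ᵥ ν)

/-- The ∞-Laplace function violates condition (3) of Class M (with `M = I`):
for any `g` unbounded below on `(−∞, 0]` there is `X ≤ I` with `−F_∞(e₁, X) > g(λ₁(X))`. -/
theorem inftyLaplace_not_classM {N : ℕ} (hN : 2 ≤ N)
    (g : ℝ → ℝ) (hg : ∀ C : ℝ, ∃ t : ℝ, t ≤ 0 ∧ g t < C) :
    ∃ X : Matrix (Fin N) (Fin N) ℝ, X.IsHermitian ∧
      Loewner X (1 : Matrix (Fin N) (Fin N) ℝ) ∧
      -Finfty (Pi.single (⟨0, by omega⟩ : Fin N) (1 : ℝ)) X > g (lam1 X) := by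
  obtain ⟨t, ht0, htg⟩ := hg 1
  set i0 : Fin N := ⟨0, by omega⟩
  set d : Fin N → ℝ := fun i => if i = i0 then 1 else t with hd
  refine ⟨diagonal d, isHermitian_diagonal d, ?_, ?_⟩
  · have : (1 : Matrix (Fin N) (Fin N) ℝ) - diagonal d = diagonal (fun i => 1 - d i) := by
      rw [← diagonal_one, diagonal_sub]
    rw [Loewner, this]
    refine posSemidef_diagonal_iff.mpr fun i => ?_
    by_cases h : i = i0 <;> simp [hd, h] <;> linarith
  · have hherm : (diagonal d).IsHermitian := isHermitian_diagonal d
    have hrange : Set.range d = {1, t} := by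
      ext x
      constructor
      · rintro ⟨i, rfl⟩
        by_cases h : i = i0 <;> simp [hd, h]
      · rintro (rfl | rfl)
        · exact ⟨i0, by simp [hd]⟩
        · refine ⟨⟨1, by omega⟩, ?_⟩
          have : (⟨1, by omega⟩ : Fin N) ≠ i0 := by
            simp [i0, Fin.ext_iff]
          simp [hd, this]
    have hlam : lam1 (diagonal d) = t := by
      rw [lam1]
      have heigs : eigs (diagonal d) = hherm.eigenvalues ∘ Tuple.sort hherm.eigenvalues := by
        rw [eigs, dif_pos hherm]
      rw [heigs]
      have h1 : ⨅ i, (hherm.eigenvalues ∘ Tuple.sort hherm.eigenvalues) i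
          = sInf (Set.range hherm.eigenvalues) := by
        rw [iInf, Set.range_comp]
        congr 1
        rw [Set.range_eq_univ.mpr (Tuple.sort hherm.eigenvalues).surjective,
          Set.image_univ]
      rw [h1, ← hherm.spectrum_real_eq_range_eigenvalues, spectrum_diagonal, hrange]
      rw [csInf_pair]
      exact min_eq_right (by linarith)
    rw [hlam]
    have hF : -Finfty (Pi.single i0 (1 : ℝ)) (diagonal d) = 1 := by
      simp [Finfty, diagonal_mulVec_single, dotProduct, Pi.single_apply, hd]
    rw [hF]
    exact htg
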